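/- For δ ∈ (0, 1/(2√2)] and the radial function λ_δ(r) = r√(1 − δ²r²), the Hessian of x ↦ λ_δ(|x|) on the annulus A = {x ∈ ℝⁿ : 1/2 < |x| < 2} has nonzero determinant, hence rank n, at every point of A. -/

import Mathlib

open Matrix in
lemma det_aux' {n : ℕ} (B A : ℝ) (v : Fin n → ℝ) (hB : B ≠ 0) :
    (Matrix.of fun j k : Fin n => B * (if j = k then 1 else 0) + A * (v j * v k)).det
      = B^n * (1 + (A/B) * ∑ i, v i^2) := by
  have h1 : (Matrix.of fun j k : Fin n => B * (if j = k then 1 else 0) + A * (v j * v k))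
      = B • (1 + Matrix.replicateCol Unit (fun j => (A/B) * v j) * Matrix.replicateRow Unit v) := by
    ext j k
    simp only [Matrix.of_apply, Matrix.smul_apply, Matrix.add_apply, Matrix.one_apply,
      Matrix.mul_apply, Matrix.replicateCol_apply, Matrix.replicateRow_apply, Finset.univ_unique,
      Finset.sum_singleton, smul_eq_mul]
    by_cases h : j = k <;> simp only [h, if_pos, if_neg, if_true] <;> field_simp <;> ring
  have h2 : v ⬝ᵥ (fun j => (A/B) * v j) = (A/B) * ∑ i, v i^2 := by
    rw [dotProduct, Finset.mul_sum]
    apply Finset.sum_congr rfl; intros; ring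
  rw [h1, Matrix.det_smul, Matrix.det_one_add_replicateCol_mul_replicateRow, h2, Fintype.card_fin]

lemma rank_aux' {n : ℕ} (M : Matrix (Fin n) (Fin n) ℝ) (h : M.det ≠ 0) : M.rank = n := by
  rw [Matrix.rank_of_isUnit M ((Matrix.isUnit_iff_isUnit_det M).mpr (isUnit_iff_ne_zero.mpr h)),
    Fintype.card_fin]

theorem hessian_lambda_delta_nondegenerate (n : ℕ) (δ : ℝ)
    (hδ0 : 0 < δ) (hδ : δ ≤ 1 / (2 * Real.sqrt 2))
    (x : EuclideanSpace ℝ (Fin n)) (hx1 : 1 / 2 < ‖x‖) (hx2 : ‖x‖ < 2) :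
    (Matrix.of fun j k : Fin n =>
        fderiv ℝ (fun y => fderiv ℝ
          (fun z : EuclideanSpace ℝ (Fin n) => ‖z‖ * Real.sqrt (1 - δ ^ 2 * ‖z‖ ^ 2)) y
          (EuclideanSpace.single k 1)) x (EuclideanSpace.single j 1)).det ≠ 0 ∧
    (Matrix.of fun j k : Fin n =>
        fderiv ℝ (fun y => fderiv ℝ
          (fun z : EuclideanSpace ℝ (Fin n) => ‖z‖ * Real.sqrt (1 - δ ^ 2 * ‖z‖ ^ 2)) y
          (EuclideanSpace.single k 1)) x (EuclideanSpace.single j 1)).rank = n := by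
  classical
  have h2 : (0:ℝ) < Real.sqrt 2 := Real.sqrt_pos.mpr (by norm_num)
  have hδ2 : δ^2 ≤ 1/8 := by
    have h := pow_le_pow_left₀ hδ0.le hδ 2
    have he : (1 / (2 * Real.sqrt 2))^2 = 1/8 := by
      rw [div_pow, mul_pow, Real.sq_sqrt (by norm_num : (2:ℝ) ≥ 0)]
      norm_num
    linarith [he ▸ h]
  set s : ℝ := ‖x‖^2 with hs
  have hs1 : 1/4 < s := by nlinarith [norm_nonneg x]
  have hs2 : s < 4 := by nlinarith [norm_nonneg x]
  have husp : ∀ t : ℝ, 1/4 < t → t < 4 → 0 < t - δ^2 * t^2 := by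
    intro t h1 h2'; nlinarith
  have hsqrtD : ∀ t : ℝ, 1/4 < t → t < 4 →
      HasDerivAt (fun r : ℝ => Real.sqrt (r - δ^2 * r^2))
        (1 / (2 * Real.sqrt (t - δ^2 * t^2)) * (1 - 2*δ^2*t)) t := by
    intro t h1 h2'
    have hu : 0 < t - δ^2 * t^2 := husp t h1 h2'
    have hpoly : HasDerivAt (fun r : ℝ => r - δ^2 * r^2) (1 - 2*δ^2*t) t := by
      have := ((hasDerivAt_pow 2 t).const_mul (δ^2))
      exact ((hasDerivAt_id' t).sub this).congr_deriv (by ring)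
    exact (Real.hasDerivAt_sqrt hu.ne').comp t hpoly
  have hq : ∀ y : EuclideanSpace ℝ (Fin n),
      HasFDerivAt (fun z : EuclideanSpace ℝ (Fin n) => ‖z‖^2) (2 • innerSL ℝ y) y :=
    fun y => (hasStrictFDerivAt_norm_sq y).hasFDerivAt
  have hfun : (fun z : EuclideanSpace ℝ (Fin n) => ‖z‖ * Real.sqrt (1 - δ ^ 2 * ‖z‖ ^ 2))
      = fun z : EuclideanSpace ℝ (Fin n) => Real.sqrt (‖z‖^2 - δ^2 * (‖z‖^2)^2) := by
    funext z
    rw [show ‖z‖^2 - δ^2*(‖z‖^2)^2 = ‖z‖^2 * (1 - δ^2*‖z‖^2) by ring,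
      Real.sqrt_mul (sq_nonneg _), Real.sqrt_sq (norm_nonneg _)]
  have hF : ∀ y : EuclideanSpace ℝ (Fin n), 1/4 < ‖y‖^2 → ‖y‖^2 < 4 →
      HasFDerivAt (fun z : EuclideanSpace ℝ (Fin n) => Real.sqrt (‖z‖^2 - δ^2 * (‖z‖^2)^2))
        ((1 / (2 * Real.sqrt (‖y‖^2 - δ^2 * (‖y‖^2)^2)) * (1 - 2*δ^2*‖y‖^2)) •
          (2 • innerSL ℝ y)) y := by
    intro y h1 h2'
    have := (hsqrtD _ h1 h2').comp_hasFDerivAt y (hq y); exact this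
  set g : Fin n → EuclideanSpace ℝ (Fin n) → ℝ := fun k y =>
    ((1 - 2*δ^2*‖y‖^2) / (2 * Real.sqrt (‖y‖^2 - δ^2 * (‖y‖^2)^2))) *
      (2 * (inner ℝ (EuclideanSpace.single k (1:ℝ)) y : ℝ)) with hg
  have hval : ∀ (k : Fin n) (y : EuclideanSpace ℝ (Fin n)), 1/4 < ‖y‖^2 → ‖y‖^2 < 4 →
      fderiv ℝ (fun z : EuclideanSpace ℝ (Fin n) => ‖z‖ * Real.sqrt (1 - δ ^ 2 * ‖z‖ ^ 2)) y
        (EuclideanSpace.single k 1) = g k y := by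
    intro k y h1 h2'
    rw [hfun, (hF y h1 h2').fderiv]
    simp only [hg, ContinuousLinearMap.smul_apply, innerSL_apply_apply, smul_eq_mul, nsmul_eq_mul,
      Nat.cast_ofNat]
    rw [real_inner_comm]
    ring
  have hU : ∀ᶠ y in nhds x, 1/4 < ‖y‖^2 ∧ ‖y‖^2 < 4 := by
    have hc : ContinuousAt (fun y : EuclideanSpace ℝ (Fin n) => ‖y‖^2) x :=
      (continuous_norm.pow 2).continuousAt
    exact hc (Ioo_mem_nhds hs1 hs2)
  have hev : ∀ k : Fin n,
      (fun y => fderiv ℝ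
        (fun z : EuclideanSpace ℝ (Fin n) => ‖z‖ * Real.sqrt (1 - δ ^ 2 * ‖z‖ ^ 2)) y
        (EuclideanSpace.single k 1)) =ᶠ[nhds x] g k :=
    fun k => hU.mono fun y hy => hval k y hy.1 hy.2
  set w : ℝ := Real.sqrt (s - δ^2 * s^2) with hwdef
  have hu : 0 < s - δ^2 * s^2 := husp s hs1 hs2
  have hw : 0 < w := Real.sqrt_pos.mpr hu
  have hw2 : w^2 = s - δ^2*s^2 := Real.sq_sqrt hu.le
  set C' : ℝ := ((-(2*δ^2)) * (2*w) - (1 - 2*δ^2*s) * (2 * (1/(2*w) * (1 - 2*δ^2*s)))) / (2*w)^2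
    with hC'
  have hcD : HasDerivAt (fun t : ℝ => (1 - 2*δ^2*t) / (2 * Real.sqrt (t - δ^2*t^2))) C' s := by
    have ha : HasDerivAt (fun t : ℝ => 1 - 2*δ^2*t) (-(2*δ^2)) s := by
      simpa using ((hasDerivAt_id s).const_mul (2*δ^2)).const_sub 1
    have hb : HasDerivAt (fun t : ℝ => 2 * Real.sqrt (t - δ^2*t^2))
        (2 * (1/(2*w) * (1 - 2*δ^2*s))) s := (hsqrtD s hs1 hs2).const_mul 2
    exact ha.div hb (by positivity)
  have hcc : HasFDerivAt (fun y : EuclideanSpace ℝ (Fin n) =>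
      (1 - 2*δ^2*‖y‖^2) / (2 * Real.sqrt (‖y‖^2 - δ^2*(‖y‖^2)^2))) (C' • (2 • innerSL ℝ x)) x :=
    by have := hcD.comp_hasFDerivAt x (hq x); exact this
  have hHjk : ∀ j k : Fin n,
      fderiv ℝ (fun y => fderiv ℝ
        (fun z : EuclideanSpace ℝ (Fin n) => ‖z‖ * Real.sqrt (1 - δ ^ 2 * ‖z‖ ^ 2)) y
        (EuclideanSpace.single k 1)) x (EuclideanSpace.single j 1)
      = (2 * ((1 - 2*δ^2*s) / (2*w))) * (if j = k then 1 else 0) + (4 * C') * (x j * x k) := by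
    intro j k
    have hdd : HasFDerivAt (fun y : EuclideanSpace ℝ (Fin n) =>
        2 * (inner ℝ (EuclideanSpace.single k (1:ℝ)) y : ℝ))
        ((2:ℝ) • (innerSL ℝ (EuclideanSpace.single k (1:ℝ)))) x :=
      ((innerSL ℝ (EuclideanSpace.single k (1:ℝ))).hasFDerivAt (x := x)).const_mul 2
    have hGk : HasFDerivAt (g k)
        (((1 - 2*δ^2*‖x‖^2) / (2 * Real.sqrt (‖x‖^2 - δ^2*(‖x‖^2)^2))) •
            ((2:ℝ) • (innerSL ℝ (EuclideanSpace.single k (1:ℝ))))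
          + (2 * (inner ℝ (EuclideanSpace.single k (1:ℝ)) x : ℝ)) • (C' • (2 • innerSL ℝ x))) x :=
      hcc.mul hdd
    rw [(hev k).fderiv_eq, hGk.fderiv]
    simp only [ContinuousLinearMap.add_apply, ContinuousLinearMap.smul_apply, innerSL_apply_apply,
      smul_eq_mul, nsmul_eq_mul, Nat.cast_ofNat, EuclideanSpace.inner_single_left,
      RCLike.conj_to_real, one_mul, EuclideanSpace.single_apply, ← hs, ← hwdef]
    rw [real_inner_comm (EuclideanSpace.single j 1) x]
    simp only [EuclideanSpace.inner_single_left, RCLike.conj_to_real, one_mul]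
    by_cases hjk : j = k
    · subst hjk; simp; ring
    · simp only [hjk, Ne.symm hjk, if_false, mul_zero, zero_mul, mul_ite]
      ring
  set Bv : ℝ := 2 * ((1 - 2*δ^2*s) / (2*w)) with hBv
  set Av : ℝ := 4 * C' with hAv
  have hBvpos : 0 < Bv := by
    have hsp : (0:ℝ) < s := by linarith
    have h18 : δ^2*s ≤ 1/8*s := mul_le_mul_of_nonneg_right hδ2 hsp.le
    have h1 : 0 < 1 - 2*δ^2*s := by linarith
    rw [hBv]; positivity
  have hkey : Bv + Av * s = (δ^2*s^2*(2*δ^2*s - 3)) / w^3 := by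
    rw [hBv, hAv, hC']
    field_simp
    linear_combination 4*(1 - 6*δ^2*‖x‖^2) *
      (hw2.trans (by rw [hs]) : w^2 = ‖x‖^2 - δ^2*(‖x‖^2)^2)
  have hneg : Bv + Av * s < 0 := by
    rw [hkey]
    apply div_neg_of_neg_of_pos _ (by positivity)
    have hsp : (0:ℝ) < s := by linarith
    have hss : 0 < δ^2*s^2 := by positivity
    have h18 : δ^2*s ≤ 1/8*s := mul_le_mul_of_nonneg_right hδ2 hsp.le
    have h3 : (0:ℝ) < 3 - 2*δ^2*s := by linarith
    rw [show δ^2*s^2*(2*δ^2*s-3) = -(δ^2*s^2*(3-2*δ^2*s)) by ring]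
    exact neg_lt_zero.mpr (mul_pos hss h3)
  have hsum : ∑ i, (x i)^2 = s := by
    rw [hs, EuclideanSpace.norm_eq, Real.sq_sqrt (by positivity)]
    simp [sq_abs]
  have hMeq : (Matrix.of fun j k : Fin n =>
      fderiv ℝ (fun y => fderiv ℝ
        (fun z : EuclideanSpace ℝ (Fin n) => ‖z‖ * Real.sqrt (1 - δ ^ 2 * ‖z‖ ^ 2)) y
        (EuclideanSpace.single k 1)) x (EuclideanSpace.single j 1))
      = Matrix.of fun j k : Fin n => Bv * (if j = k then 1 else 0) + Av * (x j * x k) := by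
    ext j k
    simp only [Matrix.of_apply]
    exact hHjk j k
  rw [hMeq]
  have hdet : (Matrix.of fun j k : Fin n =>
      Bv * (if j = k then 1 else 0) + Av * (x j * x k)).det
      = Bv^n * (1 + (Av/Bv) * s) := by
    rw [det_aux' Bv Av (fun i => x i) hBvpos.ne', hsum]
  have hfac : 1 + (Av/Bv) * s < 0 := by
    have he : (Av/Bv) * s = (Av * s)/Bv := by ring
    rw [he, ← div_self hBvpos.ne', ← add_div]
    exact div_neg_of_neg_of_pos (by linarith) hBvpos
  have hdetne : (Matrix.of fun j k : Fin n =>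
      Bv * (if j = k then 1 else 0) + Av * (x j * x k)).det ≠ 0 := by
    rw [hdet]
    exact mul_ne_zero (pow_ne_zero n hBvpos.ne') (ne_of_lt hfac)
  exact ⟨hdetne, rank_aux' _ hdetne⟩
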